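/- Let k ≥ 1, let x be uniformly distributed on {−1,1}^d with y = ∏_{j=1}^k x_j, and let w ∈ ℝ^d. Then for every feature coordinate j ∈ {1,…,k}, E[ y · x_j · ⟨w,x⟩^{k−1} ] = (k−1)! · ∏_{i∈{1,…,k}, i≠j} w_i. -/

import Mathlib

noncomputable section
open Finset

/-- ±1 encoding of a Boolean bit. -/
def pm (b : Bool) : ℝ := if b then 1 else -1

/-- Euclidean inner product of a real weight vector with a ±1 input. -/
def ip (d : ℕ) (w : Fin d → ℝ) (x : Fin d → Bool) : ℝ := ∑ i, w i * pm (x i)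

/-- The k-parity label `y = ∏_{j=1}^k x_j`. -/
def lab (k d : ℕ) (x : Fin d → Bool) : ℝ :=
  ∏ j ∈ Finset.univ.filter (fun j : Fin d => (j : ℕ) < k), pm (x j)

/-- For `x` uniform on `{−1,1}^d`, `y = ∏_{j=1}^k x_j`, `w ∈ ℝ^d` and any
feature coordinate `j ∈ {1,…,k}`:
`E[ y · x_j · ⟨w,x⟩^{k−1} ] = (k−1)! · ∏_{i ∈ {1,…,k}, i ≠ j} w_i`. -/
lemma pm_sq (b : Bool) : pm b * pm b = 1 := by cases b <;> simp [pm]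

lemma sum_pm_pow (e : ℕ) : ∑ b : Bool, pm b ^ e = if Even e then 2 else 0 := by
  rcases Nat.even_or_odd e with h | h
  · simp [pm, h, h.neg_one_pow]
  · simp [pm, h.neg_one_pow, Nat.not_even_iff_odd.mpr h]

lemma prod_comp_count (n d : ℕ) (f : Fin n → Fin d) (g : Fin d → ℝ) :
    ∏ t, g (f t) = ∏ i : Fin d, g i ^ (univ.filter fun t => f t = i).card := by
  rw [← Finset.prod_fiberwise_of_maps_to' (fun t _ => mem_univ (f t)) g]
  exact Finset.prod_congr rfl fun i _ => Finset.prod_const _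

lemma prod_indicator' (d : ℕ) (S : Finset (Fin d)) (g : Fin d → ℝ) :
    ∏ i : Fin d, g i ^ (if i ∈ S then 1 else 0) = ∏ i ∈ S, g i := by
  have : ∀ i : Fin d, g i ^ (if i ∈ S then 1 else 0) = if i ∈ S then g i else 1 := by
    intro i; split <;> simp
  simp_rw [this]
  rw [Finset.prod_ite_mem, Finset.univ_inter]

-- sum over pi
example (d : ℕ) (e : Fin d → ℕ) :
    ∑ x : Fin d → Bool, ∏ i, pm (x i) ^ e i = ∏ i, ∑ b : Bool, pm b ^ e i :=
  (Fintype.prod_sum fun i b => pm b ^ e i).symm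

lemma parity_iff (n d : ℕ) (S : Finset (Fin d)) (hcard : S.card = n) (f : Fin n → Fin d) :
    (∀ i, Even ((if i ∈ S then 1 else 0) + (univ.filter fun t => f t = i).card))
      ↔ Function.Injective f ∧ ∀ t, f t ∈ S := by
  classical
  set cnt : Fin d → ℕ := fun i => (univ.filter fun t => f t = i).card with hcnt
  have hsum : ∑ i, cnt i = n := by
    rw [← Finset.card_eq_sum_card_fiberwise (fun t (_ : t ∈ univ) => mem_univ (f t))]
    simp
  constructor
  · intro H
    have hodd : ∀ i ∈ S, 1 ≤ cnt i := by
      intro i hi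
      have h := H i
      rw [if_pos hi, add_comm, Nat.even_add_one] at h
      rcases Nat.eq_zero_or_pos (cnt i) with h0 | h1
      · exact absurd (show Even (cnt i) by rw [h0]; exact Even.zero) h
      · exact h1
    have hge : S.card ≤ ∑ i ∈ S, cnt i := by
      calc S.card = ∑ i ∈ S, 1 := Finset.card_eq_sum_ones S
        _ ≤ ∑ i ∈ S, cnt i := Finset.sum_le_sum hodd
    have hle : ∑ i ∈ S, cnt i ≤ n := hsum ▸ Finset.sum_le_sum_of_subset (subset_univ S)
    have hSsum : ∑ i ∈ S, cnt i = n := le_antisymm hle (hcard ▸ hge)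
    have hout : ∀ i, i ∉ S → cnt i = 0 := by
      have hsplit : ∑ i ∈ S, cnt i + ∑ i ∈ univ \ S, cnt i = n := by
        rw [add_comm, Finset.sum_sdiff (subset_univ S), hsum]
      have hz : ∑ i ∈ univ \ S, cnt i = 0 := by omega
      intro i hi
      exact (Finset.sum_eq_zero_iff.mp hz) i (by simp [hi])
    have hone : ∀ i ∈ S, cnt i = 1 := by
      by_contra hc
      push_neg at hc
      obtain ⟨i, hi, hne⟩ := hc
      have h2 : 2 ≤ cnt i := by have := hodd i hi; omega
      have herase : (S.erase i).card ≤ ∑ x ∈ S.erase i, cnt x := by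
        calc (S.erase i).card = ∑ x ∈ S.erase i, 1 := Finset.card_eq_sum_ones _
          _ ≤ ∑ x ∈ S.erase i, cnt x :=
            Finset.sum_le_sum fun x hx => hodd x (Finset.mem_of_mem_erase hx)
      have hadd : cnt i + ∑ x ∈ S.erase i, cnt x = n := by
        rw [Finset.add_sum_erase _ _ hi, hSsum]
      have hec : (S.erase i).card = n - 1 := by rw [Finset.card_erase_of_mem hi, hcard]
      have hn1 : 1 ≤ n := by rw [← hcard]; exact Finset.card_pos.mpr ⟨i, hi⟩
      omega
    have hmem : ∀ t, f t ∈ S := by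
      intro t
      by_contra ht
      have h0 := hout _ ht
      have : t ∈ univ.filter fun s => f s = f t := by simp
      have hp := Finset.card_pos.mpr ⟨t, this⟩
      simp only [hcnt] at h0
      omega
    refine ⟨fun t₁ t₂ he => ?_, hmem⟩
    have h1 := hone _ (hmem t₁)
    have hcle : (univ.filter fun t => f t = f t₁).card ≤ 1 := le_of_eq h1
    exact Finset.card_le_one.mp hcle t₁ (by simp) t₂ (by simp [he])
  · rintro ⟨hinj, hmem⟩ i
    have himg : univ.image f = S := by
      apply Finset.eq_of_subset_of_card_le
      · intro i hi
        obtain ⟨t, _, rfl⟩ := Finset.mem_image.mp hi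
        exact hmem t
      · rw [Finset.card_image_of_injective _ hinj, card_univ, Fintype.card_fin, hcard]
    by_cases hi : i ∈ S
    · obtain ⟨t, _, rfl⟩ := Finset.mem_image.mp (himg ▸ hi)
      have : (univ.filter fun s => f s = f t) = {t} := by
        ext s; simp only [mem_filter, mem_univ, true_and, mem_singleton]
        exact ⟨fun h => hinj h, fun h => h ▸ rfl⟩
      rw [if_pos hi, this, Finset.card_singleton]
      decide
    · have : (univ.filter fun s => f s = i) = ∅ := by
        ext s; simp only [mem_filter, mem_univ, true_and, Finset.notMem_empty, iff_false]
        rintro rfl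
        exact hi (himg ▸ Finset.mem_image_of_mem f (mem_univ s))
      rw [if_neg hi, this]
      simp

lemma count_inj (n d : ℕ) (S : Finset (Fin d)) (hcard : S.card = n) :
    (univ.filter fun f : Fin n → Fin d => Function.Injective f ∧ ∀ t, f t ∈ S).card
      = n.factorial := by
  classical
  rw [← Fintype.card_subtype]
  have e : {f : Fin n → Fin d // Function.Injective f ∧ ∀ t, f t ∈ S} ≃ (Fin n ↪ S) :=
    { toFun := fun p => ⟨fun t => ⟨p.1 t, p.2.2 t⟩,
        fun a b h => p.2.1 (congrArg Subtype.val h)⟩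
      invFun := fun g => ⟨fun t => (g t : Fin d),
        ⟨fun a b h => g.injective (Subtype.ext h), fun t => (g t).2⟩⟩
      left_inv := fun p => rfl
      right_inv := fun g => rfl }
  rw [Fintype.card_congr e, Fintype.card_embedding_eq, Fintype.card_fin, Fintype.card_coe,
    hcard, Nat.descFactorial_self]

set_option maxHeartbeats 1000000 in
theorem population_gradient_feature_coordinate (k d : ℕ) (hk : 1 ≤ k) (hkd : k ≤ d)
    (w : Fin d → ℝ) (j : Fin d) (hj : (j : ℕ) < k) :
    ((2 : ℝ) ^ d)⁻¹ * ∑ x : Fin d → Bool, lab k d x * pm (x j) * ip d w x ^ (k - 1)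
      = ((k - 1).factorial : ℝ) *
          ∏ i ∈ Finset.univ.filter (fun i : Fin d => (i : ℕ) < k ∧ i ≠ j), w i := by
  classical
  set n := k - 1 with hn
  set S : Finset (Fin d) := univ.filter (fun i : Fin d => (i : ℕ) < k ∧ i ≠ j) with hS
  clear_value n S
  have hjS : j ∉ S := by simp [hS]
  have hSins : insert j S = univ.filter (fun i : Fin d => (i : ℕ) < k) := by
    ext i
    simp only [hS, mem_insert, mem_filter, mem_univ, true_and]
    constructor
    · rintro (rfl | ⟨h, _⟩)
      · exact hj
      · exact h
    · intro h
      by_cases hij : i = j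
      · exact Or.inl hij
      · exact Or.inr ⟨h, hij⟩
  have hcardk : (univ.filter (fun i : Fin d => (i : ℕ) < k)).card = k := by
    have himg : univ.filter (fun i : Fin d => (i : ℕ) < k)
        = (univ : Finset (Fin k)).image (Fin.castLE hkd) := by
      ext i
      simp only [mem_filter, mem_univ, true_and, mem_image]
      constructor
      · intro h
        exact ⟨⟨i, h⟩, rfl⟩
      · rintro ⟨a, _, rfl⟩
        exact a.2
    rw [himg, Finset.card_image_of_injective _ (Fin.castLE_injective hkd), card_univ,
      Fintype.card_fin]
  have hcardS : S.card = n := by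
    have h := hcardk
    rw [← hSins, Finset.card_insert_of_notMem hjS] at h
    omega
  have hA : ∀ x : Fin d → Bool, lab k d x * pm (x j) = ∏ i ∈ S, pm (x i) := by
    intro x
    rw [lab, ← hSins, Finset.prod_insert hjS, mul_comm (pm (x j)), mul_assoc, pm_sq, mul_one]
  have key : ∑ x : Fin d → Bool, lab k d x * pm (x j) * ip d w x ^ n
      = ∑ f : Fin n → Fin d, (∏ t, w (f t)) *
          (if (∀ i, Even ((if i ∈ S then 1 else 0) + (univ.filter fun t => f t = i).card))
            then (2 : ℝ) ^ d else 0) := by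
    calc ∑ x : Fin d → Bool, lab k d x * pm (x j) * ip d w x ^ n
        = ∑ x : Fin d → Bool, ∑ f : Fin n → Fin d,
            (∏ t, w (f t)) * ((∏ i ∈ S, pm (x i)) * ∏ t, pm (x (f t))) := by
          refine Finset.sum_congr rfl fun x _ => ?_
          rw [hA x, ip, Fintype.sum_pow, Finset.mul_sum]
          refine Finset.sum_congr rfl fun f _ => ?_
          rw [Finset.prod_mul_distrib]
          ring
      _ = ∑ f : Fin n → Fin d, (∏ t, w (f t)) *
            ∑ x : Fin d → Bool, ((∏ i ∈ S, pm (x i)) * ∏ t, pm (x (f t))) := by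
          rw [show (∑ x : Fin d → Bool, ∑ f : Fin n → Fin d,
              (∏ t, w (f t)) * ((∏ i ∈ S, pm (x i)) * ∏ t, pm (x (f t))))
            = ∑ f : Fin n → Fin d, ∑ x : Fin d → Bool,
              (∏ t, w (f t)) * ((∏ i ∈ S, pm (x i)) * ∏ t, pm (x (f t))) from Finset.sum_comm]
          exact Finset.sum_congr rfl fun f _ => (Finset.mul_sum _ _ _).symm
      _ = _ := by
          refine Finset.sum_congr rfl fun f _ => ?_
          congr 1
          calc ∑ x : Fin d → Bool, ((∏ i ∈ S, pm (x i)) * ∏ t, pm (x (f t)))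
              = ∑ x : Fin d → Bool, ∏ i : Fin d,
                  pm (x i) ^ ((if i ∈ S then 1 else 0) + (univ.filter fun t => f t = i).card) := by
                refine Finset.sum_congr rfl fun x _ => ?_
                rw [← prod_indicator' d S (fun i => pm (x i)),
                  prod_comp_count n d f (fun i => pm (x i)), ← Finset.prod_mul_distrib]
                exact Finset.prod_congr rfl fun i _ => (pow_add _ _ _).symm
            _ = ∏ i : Fin d, ∑ b : Bool,
                  pm b ^ ((if i ∈ S then 1 else 0) + (univ.filter fun t => f t = i).card) :=
                (Fintype.prod_sum (κ := fun _ : Fin d => Bool) (fun i b =>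
                  pm b ^ ((if i ∈ S then 1 else 0)
                    + (univ.filter fun t => f t = i).card))).symm
            _ = ∏ i : Fin d, (if Even ((if i ∈ S then 1 else 0)
                  + (univ.filter fun t => f t = i).card) then (2 : ℝ) else 0) :=
                Finset.prod_congr rfl fun i _ => sum_pm_pow _
            _ = _ := by
                by_cases hall : ∀ i, Even ((if i ∈ S then 1 else 0)
                    + (univ.filter fun t => f t = i).card)
                · rw [if_pos hall]
                  rw [Finset.prod_congr rfl fun i _ => if_pos (hall i), Finset.prod_const,
                    card_univ, Fintype.card_fin]
                · rw [if_neg hall]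
                  push_neg at hall
                  obtain ⟨i, hi⟩ := hall
                  exact Finset.prod_eq_zero (mem_univ i) (if_neg hi)
  rw [key]
  have hfilt : ∑ f : Fin n → Fin d, (∏ t, w (f t)) *
        (if (∀ i, Even ((if i ∈ S then 1 else 0) + (univ.filter fun t => f t = i).card))
          then (2 : ℝ) ^ d else 0)
      = ∑ f ∈ univ.filter (fun f : Fin n → Fin d => Function.Injective f ∧ ∀ t, f t ∈ S),
          (∏ t, w (f t)) * (2 : ℝ) ^ d := by
    have h1 : (univ.filter (fun f : Fin n → Fin d =>
          ∀ i, Even ((if i ∈ S then 1 else 0) + (univ.filter fun t => f t = i).card)))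
        = univ.filter (fun f : Fin n → Fin d => Function.Injective f ∧ ∀ t, f t ∈ S) :=
      Finset.filter_congr fun f _ => parity_iff n d S hcardS f
    rw [← h1, Finset.sum_filter]
    refine Finset.sum_congr rfl fun f _ => ?_
    split <;> simp
  rw [hfilt]
  have hterm : ∀ f ∈ univ.filter (fun f : Fin n → Fin d => Function.Injective f ∧ ∀ t, f t ∈ S),
      (∏ t, w (f t)) * (2 : ℝ) ^ d = (∏ i ∈ S, w i) * 2 ^ d := by
    intro f hf
    obtain ⟨hinj, hmem⟩ := (mem_filter.mp hf).2
    have himg : univ.image f = S := by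
      apply Finset.eq_of_subset_of_card_le
      · intro i hi
        obtain ⟨t, _, rfl⟩ := mem_image.mp hi
        exact hmem t
      · rw [Finset.card_image_of_injective _ hinj, card_univ, Fintype.card_fin, hcardS]
    rw [← himg, Finset.prod_image (fun a _ b _ h => hinj h)]
  rw [Finset.sum_congr rfl hterm, Finset.sum_const, count_inj n d S hcardS, nsmul_eq_mul]
  have h2 : (2 : ℝ) ^ d ≠ 0 := by positivity
  field_simp
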